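/- Let μ > 0, σ > 0, r > 0 and c̄ ∈ [0, μ] with 2μc̄ > σ²r. Let γ be the positive root of -(1/2)σ²y² + (μ - c̄)y + r = 0 and g(x) = (c̄/r)(1 - e^{-γx}). Then g'(0) = c̄γ/r > 1. -/

import Mathlib

theorem stmt_5 (μ σ r cbar γ : ℝ) (hμ : 0 < μ) (hσ : 0 < σ) (hr : 0 < r)
    (hc0 : 0 ≤ cbar) (hcμ : cbar ≤ μ) (hcomp : 2*μ*cbar > σ^2*r)
    (hγpos : 0 < γ) (hγroot : -(1/2)*σ^2*γ^2 + (μ - cbar)*γ + r = 0)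
    (g : ℝ → ℝ) (hg : ∀ x, g x = (cbar/r) * (1 - Real.exp (-γ*x))) :
    deriv g 0 = cbar*γ/r ∧ 1 < cbar*γ/r := by
  have hgfun : g = fun x => (cbar/r) * (1 - Real.exp (-γ*x)) := funext hg
  constructor
  · have hx : HasDerivAt (fun x : ℝ => -γ*x) (-γ) 0 := by
      simpa using (hasDerivAt_id (0:ℝ)).const_mul (-γ)
    have he := hx.exp
    have hd : HasDerivAt (fun x => (cbar/r) * (1 - Real.exp (-γ*x))) (cbar / r * (0 - Real.exp (-γ * 0) * -γ)) 0 := ((hasDerivAt_const (0:ℝ) (1:ℝ)).sub he).const_mul (cbar/r)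
    rw [hgfun, hd.deriv]
    simp
    ring
  · have hkey : r < cbar * γ := by
      by_contra h
      push_neg at h
      nlinarith [mul_pos hμ hγpos, mul_pos hr hγpos, mul_lt_mul_of_pos_right hcomp (pow_pos hγpos 2),
        mul_le_mul_of_nonneg_left h (le_of_lt hr),
        mul_le_mul_of_nonneg_left h (le_of_lt (mul_pos hμ hγpos))]
    rw [lt_div_iff₀ hr]
    linarith [hkey]
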